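/- There is no 12×12 positive semidefinite complex matrix M (a state on ℂ^3⊗ℂ^4) whose partial transpose M^Γ has inertia (7,1,4), and there is no such matrix whose partial transpose has inertia (7,2,3). -/

import Mathlib

open Matrix Kronecker
open scoped ComplexOrder

/-- Partial transpose on the first factor of an `m × n` bipartite system:
`(ptrans M) ((i,k),(j,l)) = M ((j,k),(i,l))`. -/
def ptrans {m n : ℕ} (M : Matrix (Fin m × Fin n) (Fin m × Fin n) ℂ) :
    Matrix (Fin m × Fin n) (Fin m × Fin n) ℂ :=
  Matrix.of fun p q => M (q.1, p.2) (p.1, q.2)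

/-- Number of negative eigenvalues (with multiplicity) of a Hermitian matrix. -/
noncomputable def iNeg {ι : Type} [Fintype ι] [DecidableEq ι] {M : Matrix ι ι ℂ}
    (hM : M.IsHermitian) : ℕ :=
  (Finset.univ.filter fun i => hM.eigenvalues i < 0).card

/-- Number of zero eigenvalues (with multiplicity) of a Hermitian matrix. -/
noncomputable def iZero {ι : Type} [Fintype ι] [DecidableEq ι] {M : Matrix ι ι ℂ}
    (hM : M.IsHermitian) : ℕ :=
  (Finset.univ.filter fun i => hM.eigenvalues i = 0).card

/-- Number of positive eigenvalues (with multiplicity) of a Hermitian matrix. -/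
noncomputable def iPos {ι : Type} [Fintype ι] [DecidableEq ι] {M : Matrix ι ι ℂ}
    (hM : M.IsHermitian) : ℕ :=
  (Finset.univ.filter fun i => 0 < hM.eigenvalues i).card

namespace NoPT

open MvPolynomial

abbrev σt : Type := Sum (Fin 3) (Fin 4)

abbrev Rp : Type := MvPolynomial σt ℂ

/-- The bigrading weight: x-variables have weight (1,0), y-variables (0,1). -/
def wt : σt → ℕ × ℕ := Sum.elim (fun _ => ((1 : ℕ), (0 : ℕ))) (fun _ => ((0 : ℕ), (1 : ℕ)))

lemma weight_wt (d : σt →₀ ℕ) :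
    Finsupp.weight wt d = (∑ i, d (Sum.inl i), ∑ k, d (Sum.inr k)) := by
  rw [Finsupp.weight_apply, Finsupp.sum_fintype _ _ (fun s => by simp)]
  rw [Fintype.sum_sum_type]
  apply Prod.ext
  · simp [wt, Prod.fst_sum]
  · simp [wt, Prod.snd_sum]

/-- Multiplying by a weighted-homogeneous polynomial commutes with taking
weighted homogeneous components. -/
lemma whc_mul (p q : Rp) (n m : ℕ × ℕ) (hq : q.IsWeightedHomogeneous wt m) :
    weightedHomogeneousComponent wt (n + m) (p * q)
      = weightedHomogeneousComponent wt n p * q := by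
  conv_lhs => rw [p.as_sum, Finset.sum_mul, map_sum]
  conv_rhs => rw [p.as_sum, map_sum, Finset.sum_mul]
  refine Finset.sum_congr rfl fun d _ => ?_
  have hm : IsWeightedHomogeneous wt (monomial d (coeff d p)) (Finsupp.weight wt d) :=
    isWeightedHomogeneous_monomial _ _ _ rfl
  by_cases hn : n = Finsupp.weight wt d
  · subst hn
    rw [IsWeightedHomogeneous.weightedHomogeneousComponent_same (hm.mul hq),
      IsWeightedHomogeneous.weightedHomogeneousComponent_same hm]
  · rw [IsWeightedHomogeneous.weightedHomogeneousComponent_ne _ (hm.mul hq)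
      (fun h => hn (add_right_cancel h)),
      IsWeightedHomogeneous.weightedHomogeneousComponent_ne _ hm hn, zero_mul]

/-- The five bilinear forms as polynomials. -/
noncomputable def bpoly (c : Fin 5 → Fin 3 → Fin 4 → ℂ) (r : Fin 5) : Rp :=
  ∑ i, ∑ k, (MvPolynomial.C (c r i k) * X (Sum.inl i) * X (Sum.inr k))

lemma bpoly_hom (c : Fin 5 → Fin 3 → Fin 4 → ℂ) (r : Fin 5) :
    (bpoly c r).IsWeightedHomogeneous wt ((1 : ℕ), (1 : ℕ)) := by
  apply IsWeightedHomogeneous.sum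
  intro i _
  apply IsWeightedHomogeneous.sum
  intro k _
  have h1 : IsWeightedHomogeneous wt (MvPolynomial.C (c r i k) : Rp) 0 :=
    isWeightedHomogeneous_C _ _
  have h2 := isWeightedHomogeneous_X ℂ wt (Sum.inl i : σt)
  have h3 := isWeightedHomogeneous_X ℂ wt (Sum.inr k : σt)
  have := (h1.mul h2).mul h3
  simpa [wt, Prod.ext_iff] using this

noncomputable def bprod (c : Fin 5 → Fin 3 → Fin 4 → ℂ) (e : Fin 5 → ℕ) : Rp :=
  ∏ r, (bpoly c r) ^ (e r)

lemma bprod_add_single (c : Fin 5 → Fin 3 → Fin 4 → ℂ) (e : Fin 5 → ℕ) (r : Fin 5) :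
    bprod c (e + Pi.single r 1) = bprod c e * bpoly c r := by
  unfold bprod
  have h : ∀ j : Fin 5, bpoly c j ^ ((e + Pi.single r 1 : Fin 5 → ℕ) j)
      = bpoly c j ^ e j * bpoly c j ^ (Pi.single r 1 : Fin 5 → ℕ) j := fun j => by
    rw [Pi.add_apply, pow_add]
  rw [Finset.prod_congr rfl (fun j _ => h j), Finset.prod_mul_distrib]
  congr 1
  rw [Finset.prod_eq_single r (fun j _ hj => by rw [Pi.single_eq_of_ne hj, pow_zero])
    (by simp), Pi.single_eq_same, pow_one]

/-- Exponents of bidegree (m,m) as a finset. -/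
noncomputable def expFinset (m : ℕ) : Finset (σt →₀ ℕ) :=
  ((Finset.Nat.antidiagonalTuple 3 m) ×ˢ (Finset.Nat.antidiagonalTuple 4 m)).image
    (fun gd => Finsupp.equivFunOnFinite.symm (Sum.elim gd.1 gd.2))

lemma mem_expFinset {m : ℕ} {d : σt →₀ ℕ} (h : Finsupp.weight wt d = (m, m)) :
    d ∈ expFinset m := by
  rw [weight_wt] at h
  rw [Prod.ext_iff] at h
  refine Finset.mem_image.mpr ⟨((fun i => d (Sum.inl i)), (fun k => d (Sum.inr k))), ?_, ?_⟩
  · rw [Finset.mem_product]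
    constructor <;> rw [Finset.Nat.mem_antidiagonalTuple]
    · exact h.1
    · exact h.2
  · ext s
    cases s <;> simp

/-- Generators for the span bound: products of `b`-monomials of length `t`
with monomials of bidegree `(4N, 4N)`. -/
noncomputable def gens (c : Fin 5 → Fin 3 → Fin 4 → ℂ) (N t : ℕ) : Finset Rp :=
  (Finset.Nat.antidiagonalTuple 5 t ×ˢ expFinset (4*N)).image
    (fun pr => bprod c pr.1 * monomial pr.2 1)

lemma claimA (c : Fin 5 → Fin 3 → Fin 4 → ℂ) (N : ℕ)
    (hrep : ∀ (i : Fin 3) (k : Fin 4), ∃ g : Fin 5 → Rp,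
      ∑ r, g r * bpoly c r = (X (Sum.inl i) * X (Sum.inr k)) ^ N) :
    ∀ t, (weightedHomogeneousSubmodule ℂ wt (4*N + t, 4*N + t) : Submodule ℂ Rp) ≤
      Submodule.span ℂ ((gens c N t : Finset Rp) : Set Rp) := by
  intro t
  induction t with
  | zero =>
    intro p hp
    rw [mem_weightedHomogeneousSubmodule] at hp
    rw [p.as_sum]
    apply Submodule.sum_mem
    intro d hd
    have hwd : Finsupp.weight wt d = (4*N, 4*N) := by
      simpa using hp (MvPolynomial.mem_support_iff.mp hd)
    have hrw : monomial d (coeff d p) = coeff d p • (bprod c (0 : Fin 5 → ℕ) * monomial d 1) := by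
      simp [bprod, smul_monomial]
    rw [hrw]
    apply Submodule.smul_mem
    apply Submodule.subset_span
    refine Finset.mem_coe.mpr (Finset.mem_image.mpr ⟨((0 : Fin 5 → ℕ), d), ?_, rfl⟩)
    rw [Finset.mem_product]
    exact ⟨by simp [Finset.Nat.mem_antidiagonalTuple], mem_expFinset hwd⟩
  | succ t ih =>
    intro p hp
    rw [mem_weightedHomogeneousSubmodule] at hp
    rw [p.as_sum]
    apply Submodule.sum_mem
    intro d hd
    have hwd : Finsupp.weight wt d = (4*N + (t+1), 4*N + (t+1)) :=
      hp (MvPolynomial.mem_support_iff.mp hd)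
    have hw1 : ∑ i, d (Sum.inl i) = 4*N + (t+1) := by
      have h := congrArg Prod.fst hwd
      rw [weight_wt] at h
      exact h
    have hw2 : ∑ k, d (Sum.inr k) = 4*N + (t+1) := by
      have h := congrArg Prod.snd hwd
      rw [weight_wt] at h
      exact h
    obtain ⟨i, hi⟩ : ∃ i, N ≤ d (Sum.inl i) := by
      by_contra hcon
      push_neg at hcon
      have hlt : ∑ i : Fin 3, d (Sum.inl i) < ∑ _i : Fin 3, N :=
        Finset.sum_lt_sum_of_nonempty ⟨0, Finset.mem_univ 0⟩ (fun i _ => hcon i)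
      rw [hw1, Finset.sum_const] at hlt
      simp only [Finset.card_univ, Fintype.card_fin, smul_eq_mul] at hlt
      omega
    obtain ⟨k, hk⟩ : ∃ k, N ≤ d (Sum.inr k) := by
      by_contra hcon
      push_neg at hcon
      have hlt : ∑ k : Fin 4, d (Sum.inr k) < ∑ _k : Fin 4, N :=
        Finset.sum_lt_sum_of_nonempty ⟨0, Finset.mem_univ 0⟩ (fun k _ => hcon k)
      rw [hw2, Finset.sum_const] at hlt
      simp only [Finset.card_univ, Fintype.card_fin, smul_eq_mul] at hlt
      omega
    have hdd : d = (d - Finsupp.single (Sum.inl i) N - Finsupp.single (Sum.inr k) N)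
        + Finsupp.single (Sum.inl i) N + Finsupp.single (Sum.inr k) N := by
      ext s
      simp only [Finsupp.coe_add, Finsupp.coe_tsub, Pi.add_apply, Pi.sub_apply,
        Finsupp.single_apply]
      rcases s with i' | k'
      · by_cases h : i = i'
        · subst h
          simp only [Sum.inl.injEq, Sum.inr.injEq, eq_self_iff_true, if_true, reduceCtorEq,
            if_false]
          omega
        · simp only [Sum.inl.injEq, Sum.inr.injEq, h, if_false, reduceCtorEq]
          omega
      · by_cases h : k = k'
        · subst h
          simp only [Sum.inl.injEq, Sum.inr.injEq, eq_self_iff_true, if_true, reduceCtorEq,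
            if_false]
          omega
        · simp only [Sum.inl.injEq, Sum.inr.injEq, h, if_false, reduceCtorEq]
          omega
    set d' : σt →₀ ℕ := d - Finsupp.single (Sum.inl i) N - Finsupp.single (Sum.inr k) N with hd'
    obtain ⟨g, hg⟩ := hrep i k
    have hmon : monomial d (coeff d p) =
        ∑ r, (monomial d' (coeff d p) * g r) * bpoly c r := by
      have h1 : monomial d (coeff d p) =
          monomial d' (coeff d p) * ((X (Sum.inl i) * X (Sum.inr k)) ^ N) := by
        rw [mul_pow, X_pow_eq_monomial, X_pow_eq_monomial, ← mul_assoc,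
          monomial_mul, monomial_mul, mul_one, mul_one, ← hdd]
      rw [h1, ← hg, Finset.mul_sum]
      exact Finset.sum_congr rfl fun r _ => (mul_assoc _ _ _).symm
    have hmonhom : IsWeightedHomogeneous wt (monomial d (coeff d p))
        ((4*N + (t+1), 4*N + (t+1)) : ℕ × ℕ) :=
      isWeightedHomogeneous_monomial _ _ _ hwd
    have hcomp := congrArg (weightedHomogeneousComponent wt (4*N + (t+1), 4*N + (t+1))) hmon
    rw [IsWeightedHomogeneous.weightedHomogeneousComponent_same hmonhom, map_sum] at hcomp
    rw [hcomp]
    apply Submodule.sum_mem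
    intro r _
    have heq : ((4*N + t, 4*N + t) : ℕ × ℕ) + (1, 1) = (4*N + (t+1), 4*N + (t+1)) := by
      rw [Prod.mk_add_mk, Nat.add_assoc]
    rw [← heq, whc_mul _ _ _ _ (bpoly_hom c r)]
    have hq : weightedHomogeneousComponent wt (4*N + t, 4*N + t)
        (monomial d' (coeff d p) * g r) ∈ Submodule.span ℂ ((gens c N t : Finset Rp) : Set Rp) :=
      ih (weightedHomogeneousComponent_mem wt _ _)
    have hmap : (Submodule.span ℂ ((gens c N t : Finset Rp) : Set Rp)).map
        (LinearMap.mulRight ℂ (bpoly c r)) ≤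
        Submodule.span ℂ ((gens c N (t+1) : Finset Rp) : Set Rp) := by
      rw [Submodule.map_span]
      apply Submodule.span_mono
      rintro _ ⟨u, hu, rfl⟩
      obtain ⟨⟨e, dd⟩, hpair, rfl⟩ := Finset.mem_image.mp (Finset.mem_coe.mp hu)
      obtain ⟨he, hd2⟩ := Finset.mem_product.mp hpair
      refine Finset.mem_coe.mpr (Finset.mem_image.mpr ⟨(e + Pi.single r 1, dd), ?_, ?_⟩)
      · rw [Finset.mem_product]
        refine ⟨?_, hd2⟩
        rw [Finset.Nat.mem_antidiagonalTuple] at he ⊢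
        simp only [Pi.add_apply]
        rw [Finset.sum_add_distrib, he]
        simp
      · show bprod c (e + Pi.single r 1) * monomial dd 1
          = LinearMap.mulRight ℂ (bpoly c r) (bprod c e * monomial dd 1)
        rw [bprod_add_single, LinearMap.mulRight_apply]
        ring
    exact hmap ⟨_, hq, rfl⟩

lemma adt_card (t : ℕ) : (Finset.Nat.antidiagonalTuple 5 t).card ≤ (t+1)^4 := by
  have h : (Finset.Nat.antidiagonalTuple 5 t).card ≤
      (Fintype.piFinset (fun _ : Fin 4 => Finset.range (t+1))).card := by
    apply Finset.card_le_card_of_injOn (fun e => Fin.tail e)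
    · intro e he
      rw [Finset.mem_coe, Finset.Nat.mem_antidiagonalTuple] at he
      rw [Finset.mem_coe, Fintype.mem_piFinset]
      intro j
      rw [Finset.mem_range]
      have hle : Fin.tail e j ≤ t := by
        rw [← he]
        exact Finset.single_le_sum (fun (_ : Fin 5) _ => Nat.zero_le _) (Finset.mem_univ j.succ)
      exact Nat.lt_succ_of_le hle
    · intro e he f hf hef
      simp only [Finset.mem_coe, Finset.Nat.mem_antidiagonalTuple] at he hf
      have h0 : e 0 = f 0 := by
        rw [Fin.sum_univ_succ] at he hf
        have : ∑ j : Fin 4, e j.succ = ∑ j : Fin 4, f j.succ :=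
          Finset.sum_congr rfl fun j _ => congrFun hef j
        omega
      funext j
      refine Fin.cases h0 (fun j' => ?_) j
      exact congrFun hef j'
  rw [Fintype.card_piFinset] at h
  simpa using h

lemma weight_mk (γ : Fin 3 → ℕ) (δ : Fin 4 → ℕ) :
    Finsupp.weight wt (Finsupp.equivFunOnFinite.symm (Sum.elim γ δ)) = (∑ i, γ i, ∑ k, δ k) := by
  rw [weight_wt]
  simp

/-- The exponent of bidegree `(m,m)` associated to a 5-tuple of small numbers. -/
noncomputable def expo (q m : ℕ) (a : Fin 5 → Fin (q+1)) : σt →₀ ℕ :=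
  Finsupp.equivFunOnFinite.symm (Sum.elim
    ![(a 0 : ℕ), (a 1 : ℕ), m - ((a 0 : ℕ) + (a 1 : ℕ))]
    ![(a 2 : ℕ), (a 3 : ℕ), (a 4 : ℕ), m - ((a 2 : ℕ) + (a 3 : ℕ) + (a 4 : ℕ))])

lemma weight_expo (q m : ℕ) (hm : 4 * q ≤ m) (a : Fin 5 → Fin (q+1)) :
    Finsupp.weight wt (expo q m a) = (m, m) := by
  have h0 : (a 0 : ℕ) ≤ q := Fin.is_le _
  have h1 : (a 1 : ℕ) ≤ q := Fin.is_le _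
  have h2 : (a 2 : ℕ) ≤ q := Fin.is_le _
  have h3 : (a 3 : ℕ) ≤ q := Fin.is_le _
  have h4 : (a 4 : ℕ) ≤ q := Fin.is_le _
  rw [expo, weight_mk]
  have e1 : ∑ i, (![(a 0 : ℕ), (a 1 : ℕ), m - ((a 0 : ℕ) + (a 1 : ℕ))]) i = m := by
    rw [Fin.sum_univ_three]
    simp only [Matrix.cons_val_zero, Matrix.cons_val_one, Matrix.head_cons,
      Matrix.cons_val_two, Matrix.tail_cons]
    omega
  have e2 : ∑ k, (![(a 2 : ℕ), (a 3 : ℕ), (a 4 : ℕ),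
      m - ((a 2 : ℕ) + (a 3 : ℕ) + (a 4 : ℕ))]) k = m := by
    rw [Fin.sum_univ_four]
    simp only [Matrix.cons_val_zero, Matrix.cons_val_one, Matrix.head_cons,
      Matrix.cons_val_two, Matrix.tail_cons, Matrix.cons_val_three]
    omega
  rw [e1, e2]

lemma expo_inj (q m : ℕ) : Function.Injective (expo q m) := by
  intro a b h
  funext j
  fin_cases j
  · exact Fin.ext (by simpa [expo] using DFunLike.congr_fun h (Sum.inl 0))
  · exact Fin.ext (by simpa [expo] using DFunLike.congr_fun h (Sum.inl 1))
  · exact Fin.ext (by simpa [expo] using DFunLike.congr_fun h (Sum.inr 0))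
  · exact Fin.ext (by simpa [expo] using DFunLike.congr_fun h (Sum.inr 1))
  · exact Fin.ext (by simpa [expo] using DFunLike.congr_fun h (Sum.inr 2))

set_option maxRecDepth 20000 in
/-- Key lemma: any five bilinear forms on `ℂ³ × ℂ⁴` have a common zero with both
factors nonzero. -/
theorem exists_product_zero (c : Fin 5 → Fin 3 → Fin 4 → ℂ) :
    ∃ (x : Fin 3 → ℂ) (y : Fin 4 → ℂ), x ≠ 0 ∧ y ≠ 0 ∧
      ∀ r : Fin 5, ∑ i, ∑ k, c r i k * x i * y k = 0 := by
  by_contra hcon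
  push_neg at hcon
  set I : Ideal Rp := Ideal.span (Set.range (bpoly c)) with hI
  have hrad : ∀ (i : Fin 3) (k : Fin 4), (X (Sum.inl i) * X (Sum.inr k) : Rp) ∈ I.radical := by
    intro i k
    rw [← vanishingIdeal_zeroLocus_eq_radical (K := ℂ), mem_vanishingIdeal_iff]
    intro v hv
    rw [mem_zeroLocus_iff] at hv
    have hb' : ∀ r, ∑ i, ∑ k, c r i k * v (Sum.inl i) * v (Sum.inr k) = 0 := by
      intro r
      have hb : eval v (bpoly c r) = 0 :=
        hv _ (Ideal.subset_span (Set.mem_range_self r))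
      simpa only [bpoly, map_sum, eval_mul, eval_C, eval_X] using hb
    rw [map_mul, aeval_X, aeval_X]
    by_cases hx : (fun i => v (Sum.inl i)) = 0
    · rw [show v (Sum.inl i) = 0 from congrFun hx i, zero_mul]
    · by_cases hy : (fun k => v (Sum.inr k)) = 0
      · rw [show v (Sum.inr k) = 0 from congrFun hy k, mul_zero]
      · obtain ⟨r, hr⟩ := hcon _ _ hx hy
        exact absurd (hb' r) hr
  choose n hn using fun ik : Fin 3 × Fin 4 => Ideal.mem_radical_iff.mp (hrad ik.1 ik.2)
  set N : ℕ := Finset.univ.sup n with hN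
  have hrep : ∀ (i : Fin 3) (k : Fin 4), ∃ g : Fin 5 → Rp,
      ∑ r, g r * bpoly c r = (X (Sum.inl i) * X (Sum.inr k)) ^ N := by
    intro i k
    have hle : n (i, k) ≤ N := Finset.le_sup (Finset.mem_univ _)
    have hmem : ((X (Sum.inl i) * X (Sum.inr k) : Rp)) ^ N ∈ I := by
      rw [show N = (N - n (i, k)) + n (i, k) from (Nat.sub_add_cancel hle).symm, pow_add]
      exact Ideal.mul_mem_left _ _ (hn (i, k))
    rw [hI, Ideal.mem_span_range_iff_exists_fun] at hmem
    exact hmem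
  -- counting contradiction
  set d0 : ℕ := (expFinset (4*N)).card with hd0
  set s : ℕ := 256 * (d0 + 1) with hs
  set t : ℕ := 4 * s with ht
  set q : ℕ := N + s with hq
  have hm4q : 4 * q ≤ 4 * N + t := by omega
  set fam : (Fin 5 → Fin (q+1)) → Rp :=
    fun a => (MvPolynomial.monomial (expo q (4*N+t) a)) (1 : ℂ) with hfam
  have hli : LinearIndependent ℂ fam := by
    have h := (basisMonomials σt ℂ).linearIndependent.comp
      (expo q (4*N+t)) (expo_inj q (4*N+t))
    have hco : ⇑(basisMonomials σt ℂ) ∘ (expo q (4*N+t)) = fam := by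
      funext a
      rfl
    rwa [hco] at h
  have hmem : ∀ a, fam a ∈ Submodule.span ℂ ((gens c N t : Finset Rp) : Set Rp) := by
    intro a
    apply claimA c N hrep t
    rw [mem_weightedHomogeneousSubmodule]
    exact isWeightedHomogeneous_monomial _ _ _ (weight_expo q (4*N+t) hm4q a)
  set SP : Submodule ℂ Rp := Submodule.span ℂ ((gens c N t : Finset Rp) : Set Rp) with hSP
  haveI hfd : FiniteDimensional ℂ SP := by
    rw [hSP]
    exact FiniteDimensional.span_finset ℂ _
  have hli' : LinearIndependent ℂ (fun a => (⟨fam a, hmem a⟩ : SP)) := by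
    apply LinearIndependent.of_comp SP.subtype
    exact hli
  have hle : (q+1)^5 ≤ Module.finrank ℂ SP := by
    have h := hli'.fintype_card_le_finrank
    rwa [Fintype.card_fun, Fintype.card_fin, Fintype.card_fin] at h
  have hsp : Module.finrank ℂ SP ≤ (gens c N t).card := by
    rw [hSP]
    exact finrank_span_finset_le_card _
  replace hle := le_trans hle hsp
  have hgcard : (gens c N t).card ≤ (t+1)^4 * d0 := by
    calc (gens c N t).card ≤ (Finset.Nat.antidiagonalTuple 5 t ×ˢ expFinset (4*N)).card :=
          Finset.card_image_le
    _ = (Finset.Nat.antidiagonalTuple 5 t).card * d0 := by rw [Finset.card_product, hd0]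
    _ ≤ (t+1)^4 * d0 := Nat.mul_le_mul_right _ (adt_card t)
  have hfinal : (t+1)^4 * d0 < (q+1)^5 := by
    have htq : t + 1 ≤ 4 * (q+1) := by omega
    calc (t+1)^4 * d0 ≤ (4*(q+1))^4 * d0 :=
          Nat.mul_le_mul_right _ (Nat.pow_le_pow_left htq 4)
    _ = (q+1)^4 * (256 * d0) := by ring
    _ < (q+1)^4 * (q+1) := by
        have hlt : 256 * d0 < q + 1 := by omega
        exact mul_lt_mul_of_pos_left hlt (pow_pos (Nat.succ_pos q) 4)
    _ = (q+1)^5 := by ring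
  omega

end NoPT

section Main

open Finset

/-- Core impossibility: a PSD matrix on `ℂ³ ⊗ ℂ⁴` cannot have a partial transpose
with 7 negative eigenvalues. -/
theorem main_no7 (M : Matrix (Fin 3 × Fin 4) (Fin 3 × Fin 4) ℂ)
    (hΓ : (ptrans M).IsHermitian) (hM : M.PosSemidef) : iNeg hΓ ≠ 7 := by
  intro h7
  classical
  have hcard : (Finset.univ.filter fun j : Fin 3 × Fin 4 => ¬ hΓ.eigenvalues j < 0).card = 5 := by
    have h := Finset.card_filter_add_card_filter_not
      (s := (Finset.univ : Finset (Fin 3 × Fin 4))) (p := fun j => hΓ.eigenvalues j < 0)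
    rw [iNeg] at h7
    rw [h7] at h
    simp only [Finset.card_univ, Fintype.card_prod, Fintype.card_fin] at h
    omega
  set U : Matrix (Fin 3 × Fin 4) (Fin 3 × Fin 4) ℂ :=
    (hΓ.eigenvectorUnitary : Matrix (Fin 3 × Fin 4) (Fin 3 × Fin 4) ℂ) with hU
  set emb : Fin 5 → Fin 3 × Fin 4 :=
    fun r => ((Finset.equivFinOfCardEq hcard).symm r : Fin 3 × Fin 4) with hemb
  obtain ⟨x, y, hx, hy, hzero⟩ := NoPT.exists_product_zero
    (fun r i k => star (U (i, k) (emb r)))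
  set z : Fin 3 × Fin 4 → ℂ := fun p => x p.1 * y p.2 with hz
  set w : Fin 3 × Fin 4 → ℂ := (star U) *ᵥ z with hw
  have hwval : ∀ j, w j = ∑ i, ∑ k, star (U (i, k) j) * x i * y k := by
    intro j
    rw [hw]
    show ∑ p, (star U) j p * z p = _
    rw [Fintype.sum_prod_type]
    refine Finset.sum_congr rfl fun i _ => Finset.sum_congr rfl fun k _ => ?_
    simp only [Matrix.star_apply, hz, mul_assoc]
  have hwr : ∀ j, ¬ hΓ.eigenvalues j < 0 → w j = 0 := by
    intro j hj
    have hjmem : j ∈ Finset.univ.filter fun j : Fin 3 × Fin 4 => ¬ hΓ.eigenvalues j < 0 :=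
      Finset.mem_filter.mpr ⟨Finset.mem_univ _, hj⟩
    have hembr : emb ((Finset.equivFinOfCardEq hcard) ⟨j, hjmem⟩) = j := by
      simp only [hemb, Equiv.symm_apply_apply]
    have h0 := hzero ((Finset.equivFinOfCardEq hcard) ⟨j, hjmem⟩)
    rw [hembr] at h0
    rw [hwval j]
    exact h0
  have hz_ne : z ≠ 0 := by
    obtain ⟨i0, hi0⟩ := Function.ne_iff.mp hx
    obtain ⟨k0, hk0⟩ := Function.ne_iff.mp hy
    intro h0
    exact (mul_ne_zero hi0 hk0) (by simpa [hz] using congrFun h0 (i0, k0))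
  have hw_ne : w ≠ 0 := by
    intro h0
    apply hz_ne
    have hzw : z = U *ᵥ w := by
      rw [hw, Matrix.mulVec_mulVec, (Matrix.mem_unitaryGroup_iff).mp
        (Matrix.IsHermitian.eigenvectorUnitary hΓ).2, Matrix.one_mulVec]
    rw [hzw, h0, Matrix.mulVec_zero]
  -- the quadratic form, two ways
  have expand : ∀ (B : Matrix (Fin 3 × Fin 4) (Fin 3 × Fin 4) ℂ) (v : Fin 3 × Fin 4 → ℂ),
      star v ⬝ᵥ (B *ᵥ v) = ∑ pq : (Fin 3 × Fin 4) × (Fin 3 × Fin 4),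
        star (v pq.1) * B pq.1 pq.2 * v pq.2 := by
    intro B v
    rw [Fintype.sum_prod_type]
    simp only [dotProduct, Matrix.mulVec, Pi.star_apply, Finset.mul_sum, mul_assoc]
  set u : Fin 3 × Fin 4 → ℂ := fun p => star (x p.1) * y p.2 with hu
  have hT2 : star z ⬝ᵥ ((ptrans M) *ᵥ z) = star u ⬝ᵥ (M *ᵥ u) := by
    rw [expand, expand]
    apply Fintype.sum_bijective
      (fun pq : (Fin 3 × Fin 4) × (Fin 3 × Fin 4) => ((pq.2.1, pq.1.2), (pq.1.1, pq.2.2)))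
    · apply Function.Involutive.bijective
      rintro ⟨⟨i, k⟩, ⟨j, l⟩⟩
      rfl
    · rintro ⟨⟨i, k⟩, ⟨j, l⟩⟩
      show star (z (i, k)) * (ptrans M) (i, k) (j, l) * z (j, l)
        = star (u (j, k)) * M (j, k) (i, l) * u (i, l)
      have hpt : (ptrans M) (i, k) (j, l) = M (j, k) (i, l) := rfl
      rw [hpt, hz, hu]
      simp only [star_mul', star_star]
      ring
  have hT1 : star z ⬝ᵥ ((ptrans M) *ᵥ z)
      = ∑ j, (RCLike.ofReal (hΓ.eigenvalues j) : ℂ) * (star (w j) * w j) := by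
    conv_lhs => rw [hΓ.spectral_theorem, Unitary.conjStarAlgAut_apply]
    rw [← Matrix.mulVec_mulVec, ← Matrix.mulVec_mulVec, Matrix.dotProduct_mulVec]
    have hsw : star z ᵥ* U = star w := by
      rw [hw, Matrix.star_mulVec, Matrix.star_eq_conjTranspose,
        Matrix.conjTranspose_conjTranspose]
    rw [hsw, ← hw]
    rw [dotProduct]
    refine Finset.sum_congr rfl fun j _ => ?_
    rw [Matrix.mulVec_diagonal]
    simp only [Pi.star_apply, Function.comp_apply]
    ring
  have hreal : star z ⬝ᵥ ((ptrans M) *ᵥ z)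
      = ((∑ j, hΓ.eigenvalues j * Complex.normSq (w j) : ℝ) : ℂ) := by
    rw [hT1]
    push_cast
    refine Finset.sum_congr rfl fun j _ => ?_
    have hco : (RCLike.ofReal (hΓ.eigenvalues j) : ℂ) = Complex.ofReal (hΓ.eigenvalues j) := rfl
    rw [hco, Complex.star_def, mul_comm ((starRingEnd ℂ) (w j)) (w j), Complex.mul_conj]
  obtain ⟨j0, hj0⟩ := Function.ne_iff.mp hw_ne
  have hj0' : w j0 ≠ 0 := by simpa using hj0
  have hlam0 : hΓ.eigenvalues j0 < 0 := by
    by_contra hcon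
    exact hj0' (hwr j0 hcon)
  have hrneg : (∑ j, hΓ.eigenvalues j * Complex.normSq (w j)) < 0 := by
    have hlt : ∑ j, hΓ.eigenvalues j * Complex.normSq (w j)
        < ∑ _j : Fin 3 × Fin 4, (0:ℝ) := by
      apply Finset.sum_lt_sum
      · intro j _
        by_cases hj : hΓ.eigenvalues j < 0
        · exact mul_nonpos_iff.mpr (Or.inr ⟨hj.le, Complex.normSq_nonneg _⟩)
        · rw [hwr j hj]
          simp
      · exact ⟨j0, Finset.mem_univ _,
          mul_neg_of_neg_of_pos hlam0 (Complex.normSq_pos.mpr hj0')⟩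
    simpa using hlt
  have hge : (0:ℝ) ≤ ∑ j, hΓ.eigenvalues j * Complex.normSq (w j) := by
    rw [← Complex.zero_le_real, ← hreal, hT2]
    exact hM.dotProduct_mulVec_nonneg u
  exact absurd hge (not_le.mpr hrneg)

end Main


/-- There is no 3×4 state whose partial transpose has inertia (7,1,4),
and none with inertia (7,2,3). -/
theorem no_inertia_714_723 :
    (¬ ∃ (M : Matrix (Fin 3 × Fin 4) (Fin 3 × Fin 4) ℂ)
        (hΓ : (ptrans M).IsHermitian),
      M.PosSemidef ∧ iNeg hΓ = 7 ∧ iZero hΓ = 1 ∧ iPos hΓ = 4) ∧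
    (¬ ∃ (M : Matrix (Fin 3 × Fin 4) (Fin 3 × Fin 4) ℂ)
        (hΓ : (ptrans M).IsHermitian),
      M.PosSemidef ∧ iNeg hΓ = 7 ∧ iZero hΓ = 2 ∧ iPos hΓ = 3) := by
  constructor
  · rintro ⟨M, hΓ, hM, h7, -, -⟩
    exact main_no7 M hΓ hM h7
  · rintro ⟨M, hΓ, hM, h7, -, -⟩
    exact main_no7 M hΓ hM h7
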